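/- Let Λ be a discrete index set and ω a K-admissible index distance on Λ with constants C_S and C_ω. If A ∈ ℂ^{Λ×Λ} is N-localized with respect to ω for some N ≥ K, then the matrix operator (Aa)_λ := Σ_{λ'} A_{λ,λ'} a_{λ'} is bounded from ℓ^p(Λ) to ℓ^p(Λ) for all p ∈ [1,∞], with operator norm at most C_S^{N/p} C_ω ‖A‖_{𝓑_N}. -/

import Mathlib

open scoped ENNReal

/-- Hölder's inequality for `tsum`s in `ℝ≥0∞`. -/
lemma aux_tsum_holder {ι : Type*} {p q : ℝ} (hpq : p.HolderConjugate q) (f g : ι → ℝ≥0∞) :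
    ∑' i, f i * g i ≤ (∑' i, f i ^ p) ^ (1 / p) * (∑' i, g i ^ q) ^ (1 / q) := by
  letI : MeasurableSpace ι := ⊤
  haveI : MeasurableSingletonClass ι := ⟨fun _ => trivial⟩
  have h := ENNReal.lintegral_mul_le_Lp_mul_Lq (MeasureTheory.Measure.count) hpq
    (f := f) (g := g) measurable_from_top.aemeasurable measurable_from_top.aemeasurable
  rw [MeasureTheory.lintegral_count, MeasureTheory.lintegral_count,
    MeasureTheory.lintegral_count] at h
  simpa using h

/-- Schur-test estimate in `ℝ≥0∞`. -/
lemma aux_schur {Λ : Type*} {p : ℝ} (hp : 1 ≤ p) (k : Λ → Λ → ℝ≥0∞) (f : Λ → ℝ≥0∞)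
    (R C : ℝ≥0∞) (hk0 : ∀ l l', k l l' ≠ 0) (hktop : ∀ l l', k l l' ≠ ⊤)
    (hR : ∀ l, ∑' l', k l l' ≤ R) (hC : ∀ l', ∑' l, k l l' ≤ C) :
    ∑' l, (∑' l', k l l' * f l') ^ p ≤ R ^ (p - 1) * C * ∑' l, f l ^ p := by
  have hp0 : (0:ℝ) < p := lt_of_lt_of_le one_pos hp
  have hinner : ∀ l, (∑' l', k l l' * f l') ^ p ≤ R ^ (p - 1) * ∑' l', k l l' * f l' ^ p := by
    intro l
    rcases eq_or_lt_of_le hp with h1 | h1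
    · simp [← h1]
    · have hpq : p.HolderConjugate (Real.conjExponent p) := Real.HolderConjugate.conjExponent h1
      set q := Real.conjExponent p with hq
      have hq0 : q ≠ 0 := hpq.symm.ne_zero
      have hstep : ∀ l', k l l' * f l' = (k l l' ^ (1/q)) * (k l l' ^ (1/p) * f l') := by
        intro l'
        rw [← mul_assoc, ← ENNReal.rpow_add _ _ (hk0 l l') (hktop l l')]
        rw [one_div, one_div, add_comm, hpq.inv_add_inv_eq_one, ENNReal.rpow_one]
      have hH := aux_tsum_holder hpq.symm (fun l' => k l l' ^ (1/q)) (fun l' => k l l' ^ (1/p) * f l')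
      simp only [← hstep] at hH
      have hfq : ∀ l', (k l l' ^ (1/q)) ^ q = k l l' := by
        intro l'
        rw [← ENNReal.rpow_mul, one_div, inv_mul_cancel₀ hq0, ENNReal.rpow_one]
      have hgp : ∀ l', (k l l' ^ (1/p) * f l') ^ p = k l l' * f l' ^ p := by
        intro l'
        rw [ENNReal.mul_rpow_of_nonneg _ _ (le_of_lt hp0), ← ENNReal.rpow_mul, one_div,
          inv_mul_cancel₀ (ne_of_gt hp0), ENNReal.rpow_one]
      simp only [hfq, hgp] at hH
      calc (∑' l', k l l' * f l') ^ p
          ≤ ((∑' l', k l l') ^ (1/q) * (∑' l', k l l' * f l' ^ p) ^ (1/p)) ^ p :=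
            ENNReal.rpow_le_rpow hH (le_of_lt hp0)
        _ = ((∑' l', k l l') ^ (1/q)) ^ p * (∑' l', k l l' * f l' ^ p) := by
            rw [ENNReal.mul_rpow_of_nonneg _ _ (le_of_lt hp0)]
            congr 1
            rw [← ENNReal.rpow_mul, one_div, inv_mul_cancel₀ (ne_of_gt hp0), ENNReal.rpow_one]
        _ ≤ R ^ (p - 1) * (∑' l', k l l' * f l' ^ p) := by
            gcongr
            · rw [← ENNReal.rpow_mul]
              have : 1/q * p = p - 1 := by
                have h := hpq.inv_add_inv_eq_one
                have h2 : q⁻¹ = 1 - p⁻¹ := by linarith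
                rw [one_div, h2, sub_mul, one_mul, inv_mul_cancel₀ (ne_of_gt hp0)]
              rw [this]
              exact ENNReal.rpow_le_rpow (hR l) (by linarith)
  calc ∑' l, (∑' l', k l l' * f l') ^ p
      ≤ ∑' l, R ^ (p - 1) * ∑' l', k l l' * f l' ^ p := ENNReal.tsum_le_tsum hinner
    _ = R ^ (p - 1) * ∑' l, ∑' l', k l l' * f l' ^ p := ENNReal.tsum_mul_left
    _ = R ^ (p - 1) * ∑' l', (∑' l, k l l') * f l' ^ p := by
        rw [ENNReal.tsum_comm]
        congr 1
        exact tsum_congr fun l' => ENNReal.tsum_mul_right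
    _ ≤ R ^ (p - 1) * ∑' l', C * f l' ^ p := by
        gcongr with l'
        exact hC l'
    _ = R ^ (p - 1) * C * ∑' l, f l ^ p := by rw [ENNReal.tsum_mul_left, mul_assoc]

theorem stmt_6 {Λ : Type*} (ω : Λ → Λ → ℝ) (C_S C_T C_ω K : ℝ)
    (hω1 : ∀ l l' : Λ, 1 ≤ ω l l')
    (hdiag : ∀ l : Λ, ω l l = 1)
    (hCS : 1 ≤ C_S) (hCT : 1 ≤ C_T)
    (hsym : ∀ l l' : Λ, ω l l' ≤ C_S * ω l' l)
    (htri : ∀ l l' l'' : Λ, ω l l' ≤ C_T * ω l l'' * ω l'' l')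
    (hK : 1 ≤ K)
    (hadm : ∀ l : Λ, Summable (fun l' : Λ => ω l l' ^ (-K)) ∧
      ∑' l' : Λ, ω l l' ^ (-K) ≤ C_ω)
    (N : ℝ) (hNK : K ≤ N)
    (A : Λ → Λ → ℂ) (CA : ℝ) (hCA : 0 ≤ CA)
    (hA : ∀ l l' : Λ, ‖A l l'‖ ≤ CA * ω l l' ^ (-N)) :
    -- finite `p ∈ [1,∞)`
    (∀ p : ℝ, 1 ≤ p → ∀ a : Λ → ℂ,
      Summable (fun l : Λ => ‖a l‖ ^ p) →
        (∀ l : Λ, Summable (fun l' : Λ => A l l' * a l')) ∧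
        Summable (fun l : Λ => ‖∑' l' : Λ, A l l' * a l'‖ ^ p) ∧
        (∑' l : Λ, ‖∑' l' : Λ, A l l' * a l'‖ ^ p) ^ (1 / p) ≤
          C_S ^ (N / p) * C_ω * CA *
            (∑' l : Λ, ‖a l‖ ^ p) ^ (1 / p)) ∧
    -- the case `p = ∞`
    (∀ a : Λ → ℂ, ∀ Ca : ℝ, (∀ l : Λ, ‖a l‖ ≤ Ca) →
      (∀ l : Λ, Summable (fun l' : Λ => A l l' * a l')) ∧
      ∀ l : Λ, ‖∑' l' : Λ, A l l' * a l'‖ ≤ C_ω * CA * Ca) := by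
  classical
  by_cases hE : IsEmpty Λ
  · haveI : Fintype Λ := Fintype.ofIsEmpty
    constructor
    · intro p hp a ha
      have hp0 : (0:ℝ) < p := lt_of_lt_of_le one_pos hp
      refine ⟨fun l => isEmptyElim l, Summable.of_finite, ?_⟩
      rw [tsum_empty, tsum_empty, Real.zero_rpow (by positivity : (1:ℝ)/p ≠ 0)]
      simp
    · intro a Ca hCa
      exact ⟨fun l => isEmptyElim l, fun l => isEmptyElim l⟩
  haveI hNE : Nonempty Λ := not_isEmpty_iff.mp hE
  by_cases hCA0 : CA = 0
  · have hA0 : ∀ l l', A l l' = 0 := by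
      intro l l'
      have h1 := hA l l'
      rw [hCA0, zero_mul] at h1
      have h2 : ‖A l l'‖ = 0 := le_antisymm h1 (norm_nonneg _)
      simpa using h2
    constructor
    · intro p hp a ha
      have hp0 : (0:ℝ) < p := lt_of_lt_of_le one_pos hp
      refine ⟨fun l => by simpa [hA0] using summable_zero, ?_, ?_⟩
      · simp only [hA0, zero_mul, tsum_zero, map_zero, norm_zero, Real.zero_rpow (ne_of_gt hp0)]
        exact summable_zero
      · simp only [hA0, zero_mul, tsum_zero, map_zero, norm_zero, Real.zero_rpow (ne_of_gt hp0), hCA0,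
          mul_zero, zero_mul,
          Real.zero_rpow (by positivity : (1:ℝ)/p ≠ 0)]
        exact le_rfl
    · intro a Ca hCa
      refine ⟨fun l => by simpa [hA0] using summable_zero, fun l => ?_⟩
      simp [hA0, hCA0]
  have hCApos : 0 < CA := lt_of_le_of_ne hCA (Ne.symm hCA0)
  have hωpos : ∀ l l', 0 < ω l l' := fun l l' => lt_of_lt_of_le one_pos (hω1 l l')
  have hCω1 : 1 ≤ C_ω := by
    obtain ⟨l0⟩ := hNE
    have h1 : ω l0 l0 ^ (-K) ≤ ∑' l', ω l0 l' ^ (-K) :=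
      Summable.le_tsum (hadm l0).1 l0 (fun j _ => Real.rpow_nonneg (hωpos l0 j).le _)
    rw [hdiag l0, Real.one_rpow] at h1
    linarith [(hadm l0).2]
  have hCSpos : 0 < C_S := lt_of_lt_of_le one_pos hCS
  have hNK' : ∀ l l', ω l l' ^ (-N) ≤ ω l l' ^ (-K) := fun l l' =>
    Real.rpow_le_rpow_of_exponent_le (hω1 l l') (by linarith)
  set kr : Λ → Λ → ℝ := fun l l' => CA * ω l l' ^ (-N) with hkr
  have hkrpos : ∀ l l', 0 < kr l l' := fun l l' =>
    mul_pos hCApos (Real.rpow_pos_of_pos (hωpos l l') _)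
  have hrow_sum : ∀ l, Summable (kr l) := by
    intro l
    refine Summable.of_nonneg_of_le (fun l' => (hkrpos l l').le) (fun l' => ?_)
      ((hadm l).1.mul_left CA)
    exact mul_le_mul_of_nonneg_left (hNK' l l') hCA
  have hrow_bound : ∀ l, ∑' l', kr l l' ≤ CA * C_ω := by
    intro l
    calc ∑' l', kr l l' ≤ ∑' l', CA * ω l l' ^ (-K) :=
          Summable.tsum_le_tsum (fun l' => mul_le_mul_of_nonneg_left (hNK' l l') hCA) (hrow_sum l)
            ((hadm l).1.mul_left CA)
      _ = CA * ∑' l', ω l l' ^ (-K) := tsum_mul_left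
      _ ≤ CA * C_ω := mul_le_mul_of_nonneg_left (hadm l).2 hCA
  have hcol_le : ∀ l l', kr l l' ≤ (CA * C_S ^ N) * ω l' l ^ (-K) := by
    intro l l'
    have h1 : ω l' l ^ N ≤ (C_S * ω l l') ^ N :=
      Real.rpow_le_rpow (hωpos l' l).le (hsym l' l) (by linarith : (0:ℝ) ≤ N)
    have h2 : (C_S * ω l l') ^ (-N) ≤ ω l' l ^ (-N) := by
      rw [Real.rpow_neg (mul_pos hCSpos (hωpos l l')).le, Real.rpow_neg (hωpos l' l).le]
      gcongr
      exact Real.rpow_pos_of_pos (hωpos l' l) N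
    have h3 : (C_S * ω l l') ^ (-N) = C_S ^ (-N) * ω l l' ^ (-N) :=
      Real.mul_rpow hCSpos.le (hωpos l l').le
    have h5 : C_S ^ N * (C_S ^ (-N) * ω l l' ^ (-N)) = ω l l' ^ (-N) := by
      rw [← mul_assoc, ← Real.rpow_add hCSpos, add_neg_cancel, Real.rpow_zero, one_mul]
    have h4 : ω l l' ^ (-N) ≤ C_S ^ N * ω l' l ^ (-N) := by
      calc ω l l' ^ (-N) = C_S ^ N * ((C_S * ω l l') ^ (-N)) := by rw [h3, h5]
        _ ≤ C_S ^ N * ω l' l ^ (-N) :=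
            mul_le_mul_of_nonneg_left h2 (Real.rpow_pos_of_pos hCSpos N).le
    calc kr l l' = CA * ω l l' ^ (-N) := rfl
      _ ≤ CA * (C_S ^ N * ω l' l ^ (-N)) := mul_le_mul_of_nonneg_left h4 hCA
      _ ≤ CA * (C_S ^ N * ω l' l ^ (-K)) :=
          mul_le_mul_of_nonneg_left
            (mul_le_mul_of_nonneg_left (hNK' l' l) (Real.rpow_pos_of_pos hCSpos N).le) hCA
      _ = (CA * C_S ^ N) * ω l' l ^ (-K) := by ring
  have hcol_sum : ∀ l', Summable (fun l => kr l l') := fun l' =>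
    Summable.of_nonneg_of_le (fun l => (hkrpos l l').le) (fun l => hcol_le l l')
      ((hadm l').1.mul_left _)
  have hcol_bound : ∀ l', ∑' l, kr l l' ≤ CA * C_S ^ N * C_ω := by
    intro l'
    calc ∑' l, kr l l' ≤ ∑' l, (CA * C_S ^ N) * ω l' l ^ (-K) :=
          Summable.tsum_le_tsum (fun l => hcol_le l l') (hcol_sum l') ((hadm l').1.mul_left _)
      _ = (CA * C_S ^ N) * ∑' l, ω l' l ^ (-K) := tsum_mul_left
      _ ≤ (CA * C_S ^ N) * C_ω :=
          mul_le_mul_of_nonneg_left (hadm l').2 (by positivity)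
  -- term bound and summability helpers
  have hterm : ∀ (b : Λ → ℂ) (Cb : ℝ), (∀ l, ‖b l‖ ≤ Cb) →
      ∀ l l', ‖A l l' * b l'‖ ≤ CA * Cb * ω l l' ^ (-K) := by
    intro b Cb hb l l'
    have hCb0 : 0 ≤ Cb := le_trans (norm_nonneg _) (hb (Classical.arbitrary Λ))
    rw [norm_mul]
    calc ‖A l l'‖ * ‖b l'‖ ≤ (CA * ω l l' ^ (-N)) * Cb := by
          refine mul_le_mul ?_ (hb l') (norm_nonneg _) (hkrpos l l').le
          exact hA l l'
      _ ≤ (CA * ω l l' ^ (-K)) * Cb :=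
          mul_le_mul_of_nonneg_right (mul_le_mul_of_nonneg_left (hNK' l l') hCA) hCb0
      _ = CA * Cb * ω l l' ^ (-K) := by ring
  have hsum_norm : ∀ (b : Λ → ℂ) (Cb : ℝ), (∀ l, ‖b l‖ ≤ Cb) →
      ∀ l, Summable (fun l' => ‖A l l' * b l'‖) := by
    intro b Cb hb l
    exact Summable.of_nonneg_of_le (fun l' => norm_nonneg _) (hterm b Cb hb l)
      ((hadm l).1.mul_left (CA * Cb))
  have hsummable : ∀ (b : Λ → ℂ) (Cb : ℝ), (∀ l, ‖b l‖ ≤ Cb) →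
      ∀ l, Summable (fun l' => A l l' * b l') := fun b Cb hb l =>
    (hsum_norm b Cb hb l).of_norm
  have htsum_bound : ∀ (b : Λ → ℂ) (Cb : ℝ), (∀ l, ‖b l‖ ≤ Cb) →
      ∀ l, ‖∑' l', A l l' * b l'‖ ≤ C_ω * CA * Cb := by
    intro b Cb hb l
    have hCb0 : 0 ≤ Cb := le_trans (norm_nonneg _) (hb (Classical.arbitrary Λ))
    calc ‖∑' l', A l l' * b l'‖ ≤ ∑' l', ‖A l l' * b l'‖ :=
          norm_tsum_le_tsum_norm (hsum_norm b Cb hb l)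
      _ ≤ ∑' l', CA * Cb * ω l l' ^ (-K) :=
          Summable.tsum_le_tsum (hterm b Cb hb l) (hsum_norm b Cb hb l) ((hadm l).1.mul_left _)
      _ = CA * Cb * ∑' l', ω l l' ^ (-K) := tsum_mul_left
      _ ≤ CA * Cb * C_ω := mul_le_mul_of_nonneg_left (hadm l).2 (by positivity)
      _ = C_ω * CA * Cb := by ring
  refine ⟨?_, fun a Ca hCa => ⟨hsummable a Ca hCa, htsum_bound a Ca hCa⟩⟩
  intro p hp a ha
  have hp0 : (0:ℝ) < p := lt_of_lt_of_le one_pos hp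
  set T := ∑' l, ‖a l‖ ^ p with hT
  have hT0 : 0 ≤ T := tsum_nonneg fun l => Real.rpow_nonneg (norm_nonneg _) _
  have habd : ∀ l, ‖a l‖ ≤ T ^ (1/p) := by
    intro l
    have h1 : ‖a l‖ ^ p ≤ T :=
      Summable.le_tsum ha l (fun j _ => Real.rpow_nonneg (norm_nonneg _) _)
    have h2 := Real.rpow_le_rpow (Real.rpow_nonneg (norm_nonneg _) _) h1
      (by positivity : (0:ℝ) ≤ 1/p)
    rwa [← Real.rpow_mul (norm_nonneg _), mul_one_div, div_self (ne_of_gt hp0),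
      Real.rpow_one] at h2
  have hsum1 : ∀ l, Summable (fun l' => A l l' * a l') := hsummable a _ habd
  set k : Λ → Λ → ℝ≥0∞ := fun l l' => ENNReal.ofReal (kr l l') with hk
  have hk0 : ∀ l l', k l l' ≠ 0 := fun l l' => (ENNReal.ofReal_pos.mpr (hkrpos l l')).ne'
  have hkt : ∀ l l', k l l' ≠ ⊤ := fun l l' => ENNReal.ofReal_ne_top
  have hRow : ∀ l, ∑' l', k l l' ≤ ENNReal.ofReal (CA * C_ω) := by
    intro l
    rw [show (fun l' => k l l') = fun l' => ENNReal.ofReal (kr l l') from rfl]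
    rw [← ENNReal.ofReal_tsum_of_nonneg (fun l' => (hkrpos l l').le) (hrow_sum l)]
    exact ENNReal.ofReal_le_ofReal (hrow_bound l)
  have hCol : ∀ l', ∑' l, k l l' ≤ ENNReal.ofReal (CA * C_S ^ N * C_ω) := by
    intro l'
    rw [show (fun l => k l l') = fun l => ENNReal.ofReal (kr l l') from rfl]
    rw [← ENNReal.ofReal_tsum_of_nonneg (fun l => (hkrpos l l').le) (hcol_sum l')]
    exact ENNReal.ofReal_le_ofReal (hcol_bound l')
  set f : Λ → ℝ≥0∞ := fun l => ENNReal.ofReal (‖a l‖) with hf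
  have hfT : ∑' l, f l ^ p = ENNReal.ofReal T := by
    have : ∀ l, f l ^ p = ENNReal.ofReal (‖a l‖ ^ p) := fun l =>
      ENNReal.ofReal_rpow_of_nonneg (norm_nonneg _) hp0.le
    rw [tsum_congr this,
      ← ENNReal.ofReal_tsum_of_nonneg (fun l => Real.rpow_nonneg (norm_nonneg _) _) ha]
  have hpoint : ∀ l, ENNReal.ofReal (‖∑' l', A l l' * a l'‖) ≤
      ∑' l', k l l' * f l' := by
    intro l
    calc ENNReal.ofReal (‖∑' l', A l l' * a l'‖)
        ≤ ENNReal.ofReal (∑' l', ‖A l l' * a l'‖) := by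
          refine ENNReal.ofReal_le_ofReal ?_
          exact norm_tsum_le_tsum_norm (hsum_norm a _ habd l)
      _ = ∑' l', ENNReal.ofReal ‖A l l' * a l'‖ :=
          ENNReal.ofReal_tsum_of_nonneg (fun _ => norm_nonneg _) (hsum_norm a _ habd l)
      _ ≤ ∑' l', k l l' * f l' := by
          refine ENNReal.tsum_le_tsum fun l' => ?_
          rw [norm_mul, ENNReal.ofReal_mul (norm_nonneg _)]
          refine mul_le_mul' (ENNReal.ofReal_le_ofReal ?_) (le_of_eq ?_)
          · exact hA l l'
          · rfl
  have hmain := aux_schur hp k f _ _ hk0 hkt hRow hCol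
  set M := (CA * C_ω) ^ (p-1) * (CA * C_S ^ N * C_ω) * T with hM
  have hCωpos : (0:ℝ) < C_ω := lt_of_lt_of_le one_pos hCω1
  have hM0 : 0 ≤ M := by positivity
  have hchain : ∑' l, ENNReal.ofReal (‖∑' l', A l l' * a l'‖ ^ p) ≤
      ENNReal.ofReal M := by
    calc ∑' l, ENNReal.ofReal (‖∑' l', A l l' * a l'‖ ^ p)
        = ∑' l, (ENNReal.ofReal (‖∑' l', A l l' * a l'‖)) ^ p := by
          refine tsum_congr fun l => ?_
          rw [ENNReal.ofReal_rpow_of_nonneg (norm_nonneg _) hp0.le]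
      _ ≤ ∑' l, (∑' l', k l l' * f l') ^ p :=
          ENNReal.tsum_le_tsum fun l => ENNReal.rpow_le_rpow (hpoint l) hp0.le
      _ ≤ ENNReal.ofReal (CA * C_ω) ^ (p-1) * ENNReal.ofReal (CA * C_S ^ N * C_ω) *
            ∑' l, f l ^ p := hmain
      _ = ENNReal.ofReal M := by
          rw [hfT, ENNReal.ofReal_rpow_of_nonneg (by positivity) (by linarith),
            ← ENNReal.ofReal_mul (by positivity), ← ENNReal.ofReal_mul (by positivity)]
  have hne : ∑' l, ENNReal.ofReal (‖∑' l', A l l' * a l'‖ ^ p) ≠ ⊤ :=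
    ne_top_of_le_ne_top ENNReal.ofReal_ne_top hchain
  have hsum2 : Summable (fun l => ‖∑' l', A l l' * a l'‖ ^ p) := by
    refine (ENNReal.summable_toReal hne).congr fun l => ?_
    exact ENNReal.toReal_ofReal (Real.rpow_nonneg (norm_nonneg _) _)
  refine ⟨hsum1, hsum2, ?_⟩
  have hreal : ∑' l, ‖∑' l', A l l' * a l'‖ ^ p ≤ M := by
    rw [← ENNReal.ofReal_le_ofReal_iff hM0,
      ENNReal.ofReal_tsum_of_nonneg
        (fun l => Real.rpow_nonneg (norm_nonneg _) _) hsum2]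
    exact hchain
  have hfinal := Real.rpow_le_rpow
    (tsum_nonneg fun l => Real.rpow_nonneg (norm_nonneg _) _) hreal
    (by positivity : (0:ℝ) ≤ 1/p)
  have hRrpos : (0:ℝ) < CA * C_ω := mul_pos hCApos hCωpos
  have halg : M ^ (1/p) = C_S ^ (N/p) * C_ω * CA * T ^ (1/p) := by
    rw [hM, Real.mul_rpow (by positivity) hT0, Real.mul_rpow (by positivity) (by positivity)]
    have e1 : ((CA * C_ω) ^ (p-1)) ^ (1/p) = (CA * C_ω) ^ ((p-1)/p) := by
      rw [← Real.rpow_mul hRrpos.le, mul_one_div]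
    have e2 : (CA * C_S ^ N * C_ω) ^ (1/p) = (CA * C_ω) ^ (1/p) * (C_S ^ N) ^ (1/p) := by
      rw [show CA * C_S ^ N * C_ω = (CA * C_ω) * C_S ^ N by ring,
        Real.mul_rpow hRrpos.le (Real.rpow_pos_of_pos hCSpos N).le]
    have e3 : (C_S ^ N) ^ (1/p) = C_S ^ (N/p) := by
      rw [← Real.rpow_mul hCSpos.le, mul_one_div]
    have e4 : (CA * C_ω) ^ ((p-1)/p) * (CA * C_ω) ^ (1/p) = CA * C_ω := by
      rw [← Real.rpow_add hRrpos, ← add_div, sub_add_cancel, div_self (ne_of_gt hp0),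
        Real.rpow_one]
    rw [e1, e2, e3]
    calc (CA * C_ω) ^ ((p-1)/p) * ((CA * C_ω) ^ (1/p) * C_S ^ (N/p)) * T ^ (1/p)
        = ((CA * C_ω) ^ ((p-1)/p) * (CA * C_ω) ^ (1/p)) * C_S ^ (N/p) * T ^ (1/p) := by ring
      _ = C_S ^ (N/p) * C_ω * CA * T ^ (1/p) := by rw [e4]; ring
  rw [halg] at hfinal
  exact hfinal
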